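/- Let m ≥ 1 and let Ψ ∈ ℂ[w₁,…,w_m] be an irreducible polynomial such that for every point a ∈ ℂ^m with Ψ(a) = 0 one has Σ_{i=1}^m a_i · (∂Ψ/∂w_i)(a) = 0. Then Ψ is homogeneous, i.e. all monomials of Ψ with nonzero coefficient have the same total degree. -/

import Mathlib

open MvPolynomial Finsupp

namespace AuxConditionH

variable {m : ℕ}

lemma degree_add (u v : Fin m →₀ ℕ) : (u + v).degree = u.degree + v.degree := by
  rw [Finsupp.degree_eq_weight_one]; exact map_add _ u v

lemma degree_eq_sum (d : Fin m →₀ ℕ) : d.degree = d.sum fun _ e => e := rfl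

lemma euler_monomial (s : Fin m →₀ ℕ) (a : ℂ) (i : Fin m) :
    (X i : MvPolynomial (Fin m) ℂ) * pderiv i (monomial s a)
      = (s i : ℂ) • monomial s a := by
  rw [pderiv_monomial]
  by_cases h0 : s i = 0
  · simp [h0]
  · have hle : Finsupp.single i 1 ≤ s := by
      rw [Finsupp.single_le_iff]; omega
    rw [X, monomial_mul, smul_monomial, add_tsub_cancel_of_le hle, one_mul, mul_comm, smul_eq_mul]

lemma euler_eq (p : MvPolynomial (Fin m) ℂ) :
    ∑ i, (X i : MvPolynomial (Fin m) ℂ) * pderiv i p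
      = ∑ d ∈ p.support, (d.degree : ℂ) • monomial d (coeff d p) := by
  conv_lhs => rw [p.as_sum]
  have : ∀ i : Fin m, (X i : MvPolynomial (Fin m) ℂ) *
      pderiv i (∑ d ∈ p.support, monomial d (coeff d p))
      = ∑ d ∈ p.support, (d i : ℂ) • monomial d (coeff d p) := by
    intro i
    rw [map_sum, Finset.mul_sum]
    exact Finset.sum_congr rfl fun d _ => euler_monomial d (coeff d p) i
  rw [Finset.sum_congr rfl fun i _ => this i, Finset.sum_comm]
  refine Finset.sum_congr rfl fun d _ => ?_
  rw [← Finset.sum_smul]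
  congr 1
  rw [degree_eq_sum, Finsupp.sum_fintype]
  · push_cast; rfl
  · intro; rfl

lemma coeff_euler (p : MvPolynomial (Fin m) ℂ) (d : Fin m →₀ ℕ) :
    coeff d (∑ i, (X i : MvPolynomial (Fin m) ℂ) * pderiv i p)
      = (d.degree : ℂ) * coeff d p := by
  rw [euler_eq, MvPolynomial.coeff_sum]
  by_cases hd : d ∈ p.support
  · rw [Finset.sum_eq_single_of_mem d hd]
    · rw [coeff_smul, coeff_monomial, if_pos rfl, smul_eq_mul]
    · intro e _ hne
      rw [coeff_smul, coeff_monomial, if_neg hne, smul_zero]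
  · rw [Finset.sum_eq_zero, MvPolynomial.notMem_support_iff.mp hd, mul_zero]
    intro e he
    have hne : e ≠ d := fun h => hd (h ▸ he)
    rw [coeff_smul, coeff_monomial, if_neg hne, smul_zero]

lemma totalDegree_add_le_mul {p q : MvPolynomial (Fin m) ℂ} (hp : p ≠ 0) (hq : q ≠ 0) :
    p.totalDegree + q.totalDegree ≤ (p * q).totalDegree := by
  set a := p.totalDegree with ha
  set b := q.totalDegree with hb
  set P := homogeneousComponent a p with hP
  set Q := homogeneousComponent b q with hQ
  have hsup : ∀ (r : MvPolynomial (Fin m) ℂ), r ≠ 0 →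
      homogeneousComponent r.totalDegree r ≠ 0 := by
    intro r hr
    obtain ⟨d, hd, hdeg⟩ := r.support.exists_mem_eq_sup
      (MvPolynomial.support_nonempty.mpr hr) fun s => s.sum fun _ e => e
    have : coeff d (homogeneousComponent r.totalDegree r) = coeff d r := by
      rw [coeff_homogeneousComponent, if_pos]
      rw [degree_eq_sum, ← hdeg]; rfl
    intro h0
    apply MvPolynomial.mem_support_iff.mp hd
    rw [← this, h0, coeff_zero]
  have hPne : P ≠ 0 := hsup p hp
  have hQne : Q ≠ 0 := hsup q hq
  have hPQ : P * Q ≠ 0 := mul_ne_zero hPne hQne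
  have hhom : (P * Q).IsHomogeneous (a + b) :=
    (homogeneousComponent_isHomogeneous a p).mul (homogeneousComponent_isHomogeneous b q)
  obtain ⟨d, hd⟩ := MvPolynomial.support_nonempty.mpr hPQ
  have hdeg : d.degree = a + b := by
    have := hhom (MvPolynomial.mem_support_iff.mp hd)
    rw [Finsupp.degree_eq_weight_one]; exact this
  have hkey : coeff d (p * q) = coeff d (P * Q) := by
    classical
    rw [MvPolynomial.coeff_mul, MvPolynomial.coeff_mul]
    refine Finset.sum_congr rfl fun x hx => ?_
    have hsum : x.1.degree + x.2.degree = a + b := by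
      rw [← degree_add, Finset.HasAntidiagonal.mem_antidiagonal.mp hx, hdeg]
    by_cases h1 : x.1.degree = a
    · have h2 : x.2.degree = b := by omega
      rw [hP, hQ, coeff_homogeneousComponent, coeff_homogeneousComponent,
        if_pos h1, if_pos h2]
    · rw [hP, coeff_homogeneousComponent, if_neg h1, mul_comm (0 : ℂ), mul_zero]
      rcases lt_or_gt_of_ne h1 with hlt | hgt
      · have h2 : b < x.2.degree := by omega
        have : coeff x.2 q = 0 := by
          by_contra hc
          have := MvPolynomial.le_totalDegree (MvPolynomial.mem_support_iff.mpr hc)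
          rw [← degree_eq_sum] at this
          omega
        rw [this, mul_zero]
      · have : coeff x.1 p = 0 := by
          by_contra hc
          have := MvPolynomial.le_totalDegree (MvPolynomial.mem_support_iff.mpr hc)
          rw [← degree_eq_sum] at this
          omega
        rw [this, zero_mul]
  have hmem : d ∈ (p * q).support := by
    rw [MvPolynomial.mem_support_iff, hkey]
    exact MvPolynomial.mem_support_iff.mp hd
  have := MvPolynomial.le_totalDegree hmem
  rw [← degree_eq_sum, hdeg] at this
  exact this

end AuxConditionH



/-- Proposition 4.3 of the paper. An irreducible polynomial
`Ψ ∈ ℂ[w₁,…,w_m]` such that `Σᵢ aᵢ·(∂Ψ/∂wᵢ)(a) = 0` at every zero `a` of `Ψ`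
is homogeneous. -/
theorem conditionH_implies_homogeneous
    (m : ℕ) (hm : 1 ≤ m) (Ψ : MvPolynomial (Fin m) ℂ)
    (hirr : Irreducible Ψ)
    (hH : ∀ a : Fin m → ℂ, MvPolynomial.eval a Ψ = 0 →
      ∑ i, a i * MvPolynomial.eval a (MvPolynomial.pderiv i Ψ) = 0) :
    ∃ n : ℕ, Ψ.IsHomogeneous n := by
  classical
  set E : MvPolynomial (Fin m) ℂ := ∑ i, X i * pderiv i Ψ with hE
  have hΨ0 : Ψ ≠ 0 := hirr.ne_zero
  have hcoeff : ∀ d : Fin m →₀ ℕ, coeff d E = (d.degree : ℂ) * coeff d Ψ :=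
    fun d => AuxConditionH.coeff_euler Ψ d
  -- Ψ divides E via the Nullstellensatz
  have hdvd : Ψ ∣ E := by
    have hprime : (Ideal.span {Ψ}).IsPrime :=
      (Ideal.span_singleton_prime hΨ0).mpr
        (UniqueFactorizationMonoid.irreducible_iff_prime.mp hirr)
    have hmem : E ∈ vanishingIdeal ℂ (zeroLocus ℂ (Ideal.span {Ψ})) := by
      rw [mem_vanishingIdeal_iff]
      intro x hx
      show eval x E = 0
      have hΨx : eval x Ψ = 0 :=
        (mem_zeroLocus_iff.mp hx) Ψ (Ideal.subset_span rfl)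
      rw [hE, map_sum]
      have : ∀ i : Fin m, eval x (X i * pderiv i Ψ) = x i * eval x (pderiv i Ψ) := by
        intro i; rw [map_mul, eval_X]
      rw [Finset.sum_congr rfl fun i _ => this i]
      exact hH x hΨx
    rw [vanishingIdeal_zeroLocus_eq_radical, hprime.radical] at hmem
    exact (Ideal.mem_span_singleton).mp hmem
  obtain ⟨q, hq⟩ := hdvd
  by_cases hq0 : q = 0
  · -- then E = 0 and every monomial of Ψ has degree 0
    refine ⟨0, fun d hd => ?_⟩
    have h0 : (d.degree : ℂ) * coeff d Ψ = 0 := by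
      rw [← hcoeff d, hq, hq0, mul_zero, coeff_zero]
    have : (d.degree : ℂ) = 0 := by
      rcases mul_eq_zero.mp h0 with h | h
      · exact h
      · exact absurd h hd
    change (weight (fun _ => 1)) d = _
    rw [← Finsupp.degree_eq_weight_one]
    exact_mod_cast this
  · -- q is a nonzero constant
    have hE0 : E ≠ 0 := hq ▸ mul_ne_zero hΨ0 hq0
    have hsub : E.support ⊆ Ψ.support := by
      intro d hd
      rw [MvPolynomial.mem_support_iff] at hd ⊢
      intro h
      exact hd (by rw [hcoeff d, h, mul_zero])
    have hle : E.totalDegree ≤ Ψ.totalDegree :=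
      MvPolynomial.totalDegree_le_of_support_subset hsub
    have hge : Ψ.totalDegree + q.totalDegree ≤ E.totalDegree := by
      rw [hq]; exact AuxConditionH.totalDegree_add_le_mul hΨ0 hq0
    have hqdeg : q.totalDegree = 0 := by omega
    -- q = C c
    have hqC : q = C (coeff 0 q) := by
      ext d
      by_cases hd : d = 0
      · subst hd; rw [coeff_C, if_pos rfl]
      · rw [coeff_C, if_neg (Ne.symm hd)]
        by_contra hc
        have h1 := (MvPolynomial.totalDegree_eq_zero_iff _ q).mp hqdeg d
          (MvPolynomial.mem_support_iff.mpr hc)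
        exact hd (Finsupp.ext fun i => h1 i)
    set c : ℂ := coeff 0 q with hc
    have hkey : ∀ d : Fin m →₀ ℕ, (d.degree : ℂ) * coeff d Ψ = coeff d Ψ * c := by
      intro d
      rw [← hcoeff d, hq, hqC, mul_comm Ψ, coeff_C_mul, mul_comm]
    obtain ⟨d₀, hd₀⟩ := MvPolynomial.support_nonempty.mpr hΨ0
    have hd₀c : coeff d₀ Ψ ≠ 0 := MvPolynomial.mem_support_iff.mp hd₀
    have hcval : c = (d₀.degree : ℂ) := by
      have h := hkey d₀
      rw [mul_comm ((d₀.degree : ℂ))] at h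
      exact (mul_left_cancel₀ hd₀c h.symm)
    refine ⟨d₀.degree, fun d hd => ?_⟩
    have := hkey d
    rw [hcval, mul_comm (coeff d Ψ)] at this
    have heq : (d.degree : ℂ) = (d₀.degree : ℂ) := by
      exact mul_right_cancel₀ hd this
    change (weight (fun _ => 1)) d = _
    rw [← Finsupp.degree_eq_weight_one]
    exact_mod_cast heq
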